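/- (Abstract second-order convergence of the Crank–Nicolson scheme in the L² norm.) Let V be a real inner product space, and let a : V × V → ℝ be a symmetric positive semidefinite bilinear form satisfying ‖v‖² ≤ C₀ a(v,v) for all v ∈ V, with C₀ > 0. Let τ > 0, N ≥ 1, T = Nτ, tⁿ = nτ. Let u : [0,T] → V be three times continuously differentiable and ρ : [0,T] → V continuously differentiable (in the norm of V), and suppose η⁰, …, η^N ∈ V satisfy, for each n = 1, …, N and every v ∈ V, ⟪(ηⁿ - η^{n-1})/τ, v⟫ + a((ηⁿ + η^{n-1})/2, v) = -⟪(ρ(tⁿ) - ρ(t^{n-1}))/τ, v⟫ + ⟪(u(tⁿ) - u(t^{n-1}))/τ - (u'(tⁿ) + u'(t^{n-1}))/2, v⟫. Then ‖η^N‖² ≤ ‖η⁰‖² + C₀ ∫₀^T ‖ρ'(s)‖² ds + (C₀ τ⁴ / 120) ∫₀^T ‖u'''(s)‖² ds. -/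

import Mathlib

open Set intervalIntegral
open scoped RealInnerProductSpace

/-- Cauchy–Schwarz inequality for interval integrals of continuous functions. -/
lemma cs_integral_abs {A B : ℝ} (hAB : A ≤ B) {f g : ℝ → ℝ}
    (hf : ContinuousOn f (Icc A B)) (hg : ContinuousOn g (Icc A B)) :
    |∫ t in A..B, f t * g t| ≤
      Real.sqrt (∫ t in A..B, f t ^ 2) * Real.sqrt (∫ t in A..B, g t ^ 2) := by
  have huIcc : uIcc A B = Icc A B := uIcc_of_le hAB
  have hif : IntervalIntegrable (fun t => f t ^ 2) MeasureTheory.volume A B :=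
    ContinuousOn.intervalIntegrable (by rw [huIcc]; exact hf.pow 2)
  have hig : IntervalIntegrable (fun t => g t ^ 2) MeasureTheory.volume A B :=
    ContinuousOn.intervalIntegrable (by rw [huIcc]; exact hg.pow 2)
  have hifg : IntervalIntegrable (fun t => f t * g t) MeasureTheory.volume A B :=
    ContinuousOn.intervalIntegrable (by rw [huIcc]; exact hf.mul hg)
  set P := ∫ t in A..B, f t ^ 2 with hP'
  set Q := ∫ t in A..B, g t ^ 2 with hQ'
  set R := ∫ t in A..B, f t * g t with hR'
  have hP : 0 ≤ P := intervalIntegral.integral_nonneg hAB (fun x _ => sq_nonneg _)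
  have hquad : ∀ lam : ℝ, 0 ≤ P * (lam * lam) + (2 * R) * lam + Q := by
    intro lam
    have h0 : 0 ≤ ∫ t in A..B, (lam * f t + g t) ^ 2 :=
      intervalIntegral.integral_nonneg hAB (fun x _ => sq_nonneg _)
    have e1 : (fun t => (lam * f t + g t) ^ 2)
        = fun t => lam ^ 2 * f t ^ 2 + ((2 * lam) * (f t * g t) + g t ^ 2) := by
      funext t; ring
    rw [e1, intervalIntegral.integral_add (hif.const_mul _)
        ((hifg.const_mul _).add hig),
      intervalIntegral.integral_add (hifg.const_mul _) hig,
      intervalIntegral.integral_const_mul, intervalIntegral.integral_const_mul] at h0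
    nlinarith [h0]
  have hd := discrim_le_zero hquad
  rw [discrim] at hd
  have key : R ^ 2 ≤ P * Q := by nlinarith [hd]
  calc |R| = Real.sqrt (R ^ 2) := (Real.sqrt_sq_eq_abs R).symm
    _ ≤ Real.sqrt (P * Q) := Real.sqrt_le_sqrt key
    _ = Real.sqrt P * Real.sqrt Q := Real.sqrt_mul hP Q

/-- FTC on a subinterval, from derivatives within the big interval. -/
lemma ftc_sub {T A B : ℝ} (hA : 0 ≤ A) (hB : B ≤ T) (hAB : A ≤ B)
    {f f' : ℝ → ℝ}
    (hf : ∀ t ∈ Icc (0:ℝ) T, HasDerivWithinAt f (f' t) (Icc 0 T) t)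
    (hf' : ContinuousOn f' (Icc 0 T)) :
    ∫ t in A..B, f' t = f B - f A := by
  have hsub : Icc A B ⊆ Icc 0 T := Icc_subset_Icc hA hB
  apply intervalIntegral.integral_eq_sub_of_hasDeriv_right_of_le hAB
  · exact fun t ht => ((hf t (hsub ht)).continuousWithinAt).mono hsub
  · intro x hx
    have hx0 : x ∈ Ioo (0:ℝ) T := ⟨lt_of_le_of_lt hA hx.1, lt_of_lt_of_le hx.2 hB⟩
    exact ((hf x (Ioo_subset_Icc_self hx0)).hasDerivAt
      (Icc_mem_nhds hx0.1 hx0.2)).hasDerivWithinAt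
  · exact ContinuousOn.intervalIntegrable (by rw [uIcc_of_le hAB]; exact hf'.mono hsub)

/-- The Peano-kernel moment: `∫ ((t-A)(B-t))² = (B-A)⁵/30`. -/
lemma kernel_integral (A B : ℝ) :
    ∫ t in A..B, ((t - A) * (B - t)) ^ 2 = (B - A) ^ 5 / 30 := by
  have hd : ∀ x : ℝ, HasDerivAt
      (fun t => (B - A) ^ 2 * (t - A) ^ 3 / 3 - (B - A) * (t - A) ^ 4 / 2 + (t - A) ^ 5 / 5)
      (((x - A) * (B - x)) ^ 2) x := by
    intro x
    have h3 : HasDerivAt (fun t : ℝ => (t - A) ^ 3) (3 * (x - A) ^ 2) x := by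
      simpa using ((hasDerivAt_id x).sub_const A).fun_pow 3
    have h4 : HasDerivAt (fun t : ℝ => (t - A) ^ 4) (4 * (x - A) ^ 3) x := by
      simpa using ((hasDerivAt_id x).sub_const A).fun_pow 4
    have h5 : HasDerivAt (fun t : ℝ => (t - A) ^ 5) (5 * (x - A) ^ 4) x := by
      simpa using ((hasDerivAt_id x).sub_const A).fun_pow 5
    have := (((h3.const_mul ((B - A) ^ 2)).div_const 3).fun_sub
        ((h4.const_mul (B - A)).div_const 2)).fun_add (h5.div_const 5)
    refine this.congr_deriv ?_
    ring
  rw [intervalIntegral.integral_eq_sub_of_hasDerivAt (fun x _ => hd x)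
    ((Continuous.intervalIntegrable (by continuity) A B))]
  ring

/-- Peano-kernel form of the trapezoid-rule error, scalar version. -/
lemma peano_identity {T A B : ℝ} (hA : 0 ≤ A) (hB : B ≤ T) (hAB : A ≤ B)
    {g g1 g2 g3 : ℝ → ℝ}
    (hg : ∀ t ∈ Icc (0:ℝ) T, HasDerivWithinAt g (g1 t) (Icc 0 T) t)
    (hg1 : ∀ t ∈ Icc (0:ℝ) T, HasDerivWithinAt g1 (g2 t) (Icc 0 T) t)
    (hg2 : ∀ t ∈ Icc (0:ℝ) T, HasDerivWithinAt g2 (g3 t) (Icc 0 T) t)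
    (hg3 : ContinuousOn g3 (Icc 0 T)) :
    g B - g A - (B - A) / 2 * (g1 B + g1 A)
      = -(1/2) * ∫ t in A..B, (t - A) * (B - t) * g3 t := by
  have hsub : Icc A B ⊆ Icc 0 T := Icc_subset_Icc hA hB
  have hgc : ContinuousOn g (Icc A B) :=
    fun t ht => ((hg t (hsub ht)).continuousWithinAt).mono hsub
  have hg1c : ContinuousOn g1 (Icc A B) :=
    fun t ht => ((hg1 t (hsub ht)).continuousWithinAt).mono hsub
  have hg2c : ContinuousOn g2 (Icc A B) :=
    fun t ht => ((hg2 t (hsub ht)).continuousWithinAt).mono hsub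
  have hg3c : ContinuousOn g3 (Icc A B) := hg3.mono hsub
  have hcont : ContinuousOn (fun t => (1/2) * ((t - A) * (B - t)) * g2 t
      - (1/2) * (A + B - 2*t) * g1 t - g t) (Icc A B) :=
    (((Continuous.continuousOn
        (by continuity : Continuous fun t : ℝ => (1/2) * ((t - A) * (B - t)))).mul hg2c).sub
      ((Continuous.continuousOn
        (by continuity : Continuous fun t : ℝ => (1/2) * (A + B - 2*t))).mul hg1c)).sub hgc
  have hderiv : ∀ x ∈ Ioo A B, HasDerivWithinAt
      (fun t => (1/2) * ((t - A) * (B - t)) * g2 t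
        - (1/2) * (A + B - 2*t) * g1 t - g t)
      ((1/2) * ((x - A) * (B - x) * g3 x)) (Ioi x) x := by
    intro x hx
    have hx0 : x ∈ Ioo (0:ℝ) T := ⟨lt_of_le_of_lt hA hx.1, lt_of_lt_of_le hx.2 hB⟩
    have hmem := Ioo_subset_Icc_self hx0
    have hnb : Icc (0:ℝ) T ∈ nhds x := Icc_mem_nhds hx0.1 hx0.2
    have h0 : HasDerivAt g (g1 x) x := (hg x hmem).hasDerivAt hnb
    have h1 : HasDerivAt g1 (g2 x) x := (hg1 x hmem).hasDerivAt hnb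
    have h2 : HasDerivAt g2 (g3 x) x := (hg2 x hmem).hasDerivAt hnb
    have hp : HasDerivAt (fun t : ℝ => (1/2) * ((t - A) * (B - t)))
        ((1/2) * (A + B - 2*x)) x := by
      have h := (((hasDerivAt_id x).sub_const A).fun_mul
        ((hasDerivAt_const x B).fun_sub (hasDerivAt_id x))).const_mul (1/2 : ℝ)
      simp only [id_eq] at h
      have e : (1/2 : ℝ) * (1 * (B - x) + (x - A) * (0 - 1)) = (1/2) * (A + B - 2*x) := by
        ring
      rw [e] at h
      exact h
    have hq : HasDerivAt (fun t : ℝ => (1/2) * (A + B - 2*t)) (-1 : ℝ) x := by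
      have h := ((hasDerivAt_const x (A + B)).sub
        ((hasDerivAt_id x).const_mul (2:ℝ))).const_mul (1/2 : ℝ)
      simp only [id_eq] at h
      have e : (1/2 : ℝ) * (0 - 2 * 1) = (-1 : ℝ) := by norm_num
      rw [e] at h
      exact h
    have hderH := ((hp.mul h2).sub (hq.mul h1)).sub h0
    have e2 : (1/2 * (A + B - 2*x) * g2 x + 1/2 * ((x - A) * (B - x)) * g3 x
        - (-1 * g1 x + 1/2 * (A + B - 2*x) * g2 x) - g1 x)
        = (1/2) * ((x - A) * (B - x) * g3 x) := by ring
    rw [e2] at hderH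
    exact hderH.hasDerivWithinAt
  have hint : IntervalIntegrable (fun t => (1/2) * ((t - A) * (B - t) * g3 t))
      MeasureTheory.volume A B :=
    ContinuousOn.intervalIntegrable (by
      rw [uIcc_of_le hAB]
      exact ((Continuous.continuousOn
        (by continuity : Continuous fun t : ℝ => (t - A) * (B - t))).mul hg3c).const_smul (1/2 : ℝ))
  have key := intervalIntegral.integral_eq_sub_of_hasDeriv_right_of_le hAB hcont hderiv hint
  rw [intervalIntegral.integral_const_mul] at key
  linarith [key]

set_option maxHeartbeats 2000000 in
/-- Abstract second-order L² convergence of the Crank–Nicolson scheme: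
`‖η^N‖² ≤ ‖η⁰‖² + C₀ ∫₀ᵀ ‖ρ'‖² + (C₀ τ⁴ / 120) ∫₀ᵀ ‖u'''‖²`. -/
theorem crank_nicolson_L2_convergence
    {V : Type*} [NormedAddCommGroup V] [InnerProductSpace ℝ V]
    (a : V →ₗ[ℝ] V →ₗ[ℝ] ℝ)
    (hsym : ∀ x y : V, a x y = a y x)
    (hpos : ∀ v : V, 0 ≤ a v v)
    (C₀ : ℝ) (hC₀ : 0 < C₀)
    (hpoincare : ∀ v : V, ‖v‖ ^ 2 ≤ C₀ * a v v)
    (τ : ℝ) (hτ : 0 < τ) (N : ℕ) (hN : 1 ≤ N) (T : ℝ) (hT : T = N * τ)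
    (u u' u'' u''' ρ ρ' : ℝ → V)
    (hu : ∀ t ∈ Icc (0 : ℝ) T, HasDerivWithinAt u (u' t) (Icc 0 T) t)
    (hu' : ∀ t ∈ Icc (0 : ℝ) T, HasDerivWithinAt u' (u'' t) (Icc 0 T) t)
    (hu'' : ∀ t ∈ Icc (0 : ℝ) T, HasDerivWithinAt u'' (u''' t) (Icc 0 T) t)
    (hu''' : ContinuousOn u''' (Icc 0 T))
    (hρ : ∀ t ∈ Icc (0 : ℝ) T, HasDerivWithinAt ρ (ρ' t) (Icc 0 T) t)
    (hρ' : ContinuousOn ρ' (Icc 0 T))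
    (η : ℕ → V)
    (hscheme : ∀ n, 1 ≤ n → n ≤ N → ∀ v : V,
      ⟪(1 / τ) • (η n - η (n - 1)), v⟫ + a ((1 / 2 : ℝ) • (η n + η (n - 1))) v
        = -⟪(1 / τ) • (ρ ((n : ℝ) * τ) - ρ (((n : ℝ) - 1) * τ)), v⟫
          + ⟪(1 / τ) • (u ((n : ℝ) * τ) - u (((n : ℝ) - 1) * τ))
              - (1 / 2 : ℝ) • (u' ((n : ℝ) * τ) + u' (((n : ℝ) - 1) * τ)), v⟫) :
    ‖η N‖ ^ 2 ≤ ‖η 0‖ ^ 2 + C₀ * (∫ s in (0 : ℝ)..T, ‖ρ' s‖ ^ 2)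
      + (C₀ * τ ^ 4 / 120) * ∫ s in (0 : ℝ)..T, ‖u''' s‖ ^ 2 := by
  have hτ' : (τ:ℝ) ≠ 0 := ne_of_gt hτ
  have hρ'n : ContinuousOn (fun s => ‖ρ' s‖ ^ 2) (Icc 0 T) := (hρ'.norm).pow 2
  have hu'''n : ContinuousOn (fun s => ‖u''' s‖ ^ 2) (Icc 0 T) := (hu'''.norm).pow 2
  -- single step estimate
  have step : ∀ n : ℕ, 1 ≤ n → n ≤ N →
      ‖η n‖ ^ 2 ≤ ‖η (n-1)‖ ^ 2
        + C₀ * (∫ s in (((n:ℝ)-1)*τ)..((n:ℝ)*τ), ‖ρ' s‖ ^ 2)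
        + (C₀ * τ ^ 4 / 120) * ∫ s in (((n:ℝ)-1)*τ)..((n:ℝ)*τ), ‖u''' s‖ ^ 2 := by
    intro n h1 h2
    set A := ((n:ℝ)-1)*τ with hAdef
    set B := ((n:ℝ))*τ with hBdef
    have hn1 : (1:ℝ) ≤ (n:ℝ) := by exact_mod_cast h1
    have hnN : ((n:ℝ)) ≤ (N:ℝ) := by exact_mod_cast h2
    have hA : 0 ≤ A := mul_nonneg (by linarith) hτ.le
    have hB : B ≤ T := by
      rw [hT, hBdef]
      exact mul_le_mul_of_nonneg_right hnN hτ.le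
    have hBA : B - A = τ := by rw [hAdef, hBdef]; ring
    have hAB : A ≤ B := by rw [hAdef, hBdef]; nlinarith
    have hsub : Icc A B ⊆ Icc (0:ℝ) T := Icc_subset_Icc hA hB
    set w := η n + η (n-1) with hw
    have hs := hscheme n h1 h2 w
    -- rewrite the four inner-product terms
    have e1 : ⟪(1/τ) • (η n - η (n-1)), w⟫ = (1/τ) * (‖η n‖^2 - ‖η (n-1)‖^2) := by
      rw [real_inner_smul_left]
      congr 1
      rw [hw, inner_sub_left, inner_add_right, inner_add_right,
        real_inner_comm (η (n-1)) (η n), real_inner_self_eq_norm_sq,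
        real_inner_self_eq_norm_sq]
      ring
    have e2 : a ((1/2:ℝ) • w) w = (1/2) * (a w w) := by
      rw [map_smul]; simp [smul_eq_mul]
    have e3 : ⟪(1/τ) • (ρ B - ρ A), w⟫ = (1/τ) * (⟪ρ B, w⟫ - ⟪ρ A, w⟫) := by
      rw [real_inner_smul_left, inner_sub_left]
    have e4 : ⟪(1/τ) • (u B - u A) - (1/2:ℝ) • (u' B + u' A), w⟫
        = (1/τ) * (⟪u B, w⟫ - ⟪u A, w⟫) - (1/2) * (⟪u' B, w⟫ + ⟪u' A, w⟫) := by
      rw [inner_sub_left, real_inner_smul_left, real_inner_smul_left,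
        inner_sub_left, inner_add_left]
    rw [e1, e2, e3, e4] at hs
    -- paired scalar derivative facts
    have hρw : ∀ t ∈ Icc (0:ℝ) T,
        HasDerivWithinAt (fun s => ⟪ρ s, w⟫) (⟪ρ' t, w⟫) (Icc 0 T) t := by
      intro t ht
      simpa using (hρ t ht).inner ℝ (hasDerivWithinAt_const t _ w)
    have huw : ∀ t ∈ Icc (0:ℝ) T,
        HasDerivWithinAt (fun s => ⟪u s, w⟫) (⟪u' t, w⟫) (Icc 0 T) t := by
      intro t ht
      simpa using (hu t ht).inner ℝ (hasDerivWithinAt_const t _ w)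
    have hu'w : ∀ t ∈ Icc (0:ℝ) T,
        HasDerivWithinAt (fun s => ⟪u' s, w⟫) (⟪u'' t, w⟫) (Icc 0 T) t := by
      intro t ht
      simpa using (hu' t ht).inner ℝ (hasDerivWithinAt_const t _ w)
    have hu''w : ∀ t ∈ Icc (0:ℝ) T,
        HasDerivWithinAt (fun s => ⟪u'' s, w⟫) (⟪u''' t, w⟫) (Icc 0 T) t := by
      intro t ht
      simpa using (hu'' t ht).inner ℝ (hasDerivWithinAt_const t _ w)
    have hFTC : ∫ t in A..B, ⟪ρ' t, w⟫ = ⟪ρ B, w⟫ - ⟪ρ A, w⟫ :=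
      ftc_sub hA hB hAB hρw (hρ'.inner continuousOn_const)
    have hPe : ⟪u B, w⟫ - ⟪u A, w⟫ - (B-A)/2 * (⟪u' B, w⟫ + ⟪u' A, w⟫)
        = -(1/2) * ∫ t in A..B, (t - A) * (B - t) * ⟪u''' t, w⟫ :=
      peano_identity hA hB hAB huw hu'w hu''w (hu'''.inner continuousOn_const)
    rw [hBA] at hPe
    set Iρ := ∫ t in A..B, ⟪ρ' t, w⟫ with hIρ
    set Ik := ∫ t in A..B, (t - A) * (B - t) * ⟪u''' t, w⟫ with hIk
    have main : ‖η n‖^2 - ‖η (n-1)‖^2 + (τ/2) * (a w w) = -Iρ - (1/2) * Ik := by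
      field_simp at hs
      have h4 : (4*τ^2 : ℝ) ≠ 0 := mul_ne_zero (by norm_num) (pow_ne_zero 2 hτ')
      have main' : 4*τ^2*(‖η n‖^2 - ‖η (n-1)‖^2 + (τ/2) * (a w w))
          = 4*τ^2*(-Iρ - (1/2) * Ik) := by
        linear_combination (2*τ^2)*hs + (4*τ^2)*hFTC + (4*τ^2)*hPe
      exact mul_left_cancel₀ h4 main'
    -- Cauchy-Schwarz bounds
    have hρ'wc : ContinuousOn (fun t => ⟪ρ' t, w⟫) (Icc A B) :=
      (hρ'.inner continuousOn_const).mono hsub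
    have hu'''wc : ContinuousOn (fun t => ⟪u''' t, w⟫) (Icc A B) :=
      (hu'''.inner continuousOn_const).mono hsub
    set P := ∫ s in A..B, ‖ρ' s‖ ^ 2 with hPdef
    set Q := ∫ s in A..B, ‖u''' s‖ ^ 2 with hQdef
    have hPnn : 0 ≤ P := intervalIntegral.integral_nonneg hAB (fun x _ => sq_nonneg _)
    have hQnn : 0 ≤ Q := intervalIntegral.integral_nonneg hAB (fun x _ => sq_nonneg _)
    have hρ'c2 : ContinuousOn (fun s => ‖ρ' s‖ ^ 2) (Icc A B) := hρ'n.mono hsub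
    have hu'''c2 : ContinuousOn (fun s => ‖u''' s‖ ^ 2) (Icc A B) := hu'''n.mono hsub
    -- pointwise inner product square bounds  
    have hptρ : ∀ t ∈ Icc A B, ⟪ρ' t, w⟫ ^ 2 ≤ ‖ρ' t‖ ^ 2 * ‖w‖ ^ 2 := by
      intro t _
      calc ⟪ρ' t, w⟫ ^ 2 = |⟪ρ' t, w⟫| ^ 2 := (sq_abs _).symm
        _ ≤ (‖ρ' t‖ * ‖w‖) ^ 2 :=
            pow_le_pow_left₀ (abs_nonneg _) (abs_real_inner_le_norm (ρ' t) w) 2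
        _ = ‖ρ' t‖ ^ 2 * ‖w‖ ^ 2 := mul_pow _ _ 2
    have hptu : ∀ t ∈ Icc A B, ⟪u''' t, w⟫ ^ 2 ≤ ‖u''' t‖ ^ 2 * ‖w‖ ^ 2 := by
      intro t _
      calc ⟪u''' t, w⟫ ^ 2 = |⟪u''' t, w⟫| ^ 2 := (sq_abs _).symm
        _ ≤ (‖u''' t‖ * ‖w‖) ^ 2 :=
            pow_le_pow_left₀ (abs_nonneg _) (abs_real_inner_le_norm (u''' t) w) 2
        _ = ‖u''' t‖ ^ 2 * ‖w‖ ^ 2 := mul_pow _ _ 2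
    have huIcc : uIcc A B = Icc A B := uIcc_of_le hAB
    -- square-integral comparisons
    have iiρ1 : IntervalIntegrable (fun t => ⟪ρ' t, w⟫ ^ 2) MeasureTheory.volume A B :=
      ContinuousOn.intervalIntegrable (by rw [huIcc]; exact hρ'wc.pow 2)
    have iiρ2 : IntervalIntegrable (fun t => ‖ρ' t‖ ^ 2 * ‖w‖ ^ 2) MeasureTheory.volume A B :=
      ContinuousOn.intervalIntegrable (by rw [huIcc]; exact hρ'c2.mul continuousOn_const)
    have hsqρ : (∫ t in A..B, ⟪ρ' t, w⟫ ^ 2) ≤ P * ‖w‖ ^ 2 := by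
      have := intervalIntegral.integral_mono_on hAB iiρ1 iiρ2 hptρ
      rwa [intervalIntegral.integral_mul_const] at this
    have iiu1 : IntervalIntegrable (fun t => ⟪u''' t, w⟫ ^ 2) MeasureTheory.volume A B :=
      ContinuousOn.intervalIntegrable (by rw [huIcc]; exact hu'''wc.pow 2)
    have iiu2 : IntervalIntegrable (fun t => ‖u''' t‖ ^ 2 * ‖w‖ ^ 2) MeasureTheory.volume A B :=
      ContinuousOn.intervalIntegrable (by rw [huIcc]; exact hu'''c2.mul continuousOn_const)
    have hsqu : (∫ t in A..B, ⟪u''' t, w⟫ ^ 2) ≤ Q * ‖w‖ ^ 2 := by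
      have := intervalIntegral.integral_mono_on hAB iiu1 iiu2 hptu
      rwa [intervalIntegral.integral_mul_const] at this
    -- CS for Iρ (against the constant 1)
    have csρ := cs_integral_abs hAB (continuousOn_const : ContinuousOn (fun _ => (1:ℝ)) (Icc A B)) hρ'wc
    simp only [one_mul, one_pow] at csρ
    have hone : (∫ _t in A..B, (1:ℝ)) = τ := by
      simp only [intervalIntegral.integral_const, smul_eq_mul, mul_one]
      exact hBA
    rw [hone] at csρ
    have hIρbound : |Iρ| ≤ Real.sqrt τ * (Real.sqrt P * ‖w‖) := by
      refine le_trans csρ ?_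
      gcongr
      calc Real.sqrt (∫ t in A..B, ⟪ρ' t, w⟫ ^ 2)
          ≤ Real.sqrt (P * ‖w‖ ^ 2) := Real.sqrt_le_sqrt hsqρ
        _ = Real.sqrt P * ‖w‖ := by
            rw [Real.sqrt_mul hPnn, Real.sqrt_sq (norm_nonneg w)]
    -- CS for Ik (against the kernel)
    have csk := cs_integral_abs hAB (Continuous.continuousOn
      (by continuity : Continuous fun t : ℝ => (t - A) * (B - t))) hu'''wc
    have hker : (∫ t in A..B, ((t - A) * (B - t)) ^ 2) = τ^5/30 := by
      rw [kernel_integral, hBA]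
    rw [hker] at csk
    have hIkbound : |Ik| ≤ Real.sqrt (τ^5/30) * (Real.sqrt Q * ‖w‖) := by
      refine le_trans csk ?_
      gcongr
      calc Real.sqrt (∫ t in A..B, ⟪u''' t, w⟫ ^ 2)
          ≤ Real.sqrt (Q * ‖w‖ ^ 2) := Real.sqrt_le_sqrt hsqu
        _ = Real.sqrt Q * ‖w‖ := by
            rw [Real.sqrt_mul hQnn, Real.sqrt_sq (norm_nonneg w)]
    -- collect and conclude with AM-GM
    set W := ‖w‖ with hWdef
    set p := Real.sqrt P with hpdef
    set q := Real.sqrt Q with hqdef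
    set s1 := Real.sqrt τ with hs1def
    set s2 := Real.sqrt (τ^5/30) with hs2def
    have hs1sq : s1^2 = τ := Real.sq_sqrt hτ.le
    have hs2sq : s2^2 = τ^5/30 := Real.sq_sqrt (by positivity)
    have hpsq : p^2 = P := Real.sq_sqrt hPnn
    have hqsq : q^2 = Q := Real.sq_sqrt hQnn
    have hpnn : 0 ≤ p := Real.sqrt_nonneg _
    have hqnn : 0 ≤ q := Real.sqrt_nonneg _
    have hs1nn : 0 ≤ s1 := Real.sqrt_nonneg _
    have hs2nn : 0 ≤ s2 := Real.sqrt_nonneg _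
    have hWnn : 0 ≤ W := norm_nonneg _
    have hmain2 : ‖η n‖^2 - ‖η (n-1)‖^2 + (τ/2) * (a w w)
        ≤ s1 * (p * W) + (1/2) * (s2 * (q * W)) := by
      rw [main]
      linarith [hIρbound, hIkbound, neg_le_abs Iρ, neg_le_abs Ik]
    have hpo : W^2 ≤ C₀ * a w w := hpoincare w
    have haww : 0 ≤ a w w := hpos w
    have m1 : 4*τ*C₀*(s1*(p*W)) ≤ τ^2*W^2 + 4*C₀^2*τ*p^2 := by
      have e : (τ*W - 2*C₀*(s1*p))^2
          = τ^2*W^2 - 4*τ*C₀*(s1*(p*W)) + 4*C₀^2*(s1^2)*p^2 := by ring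
      rw [hs1sq] at e
      linarith [sq_nonneg (τ*W - 2*C₀*(s1*p)), e]
    have m2 : 2*τ*C₀*(s2*(q*W)) ≤ τ^2*W^2 + C₀^2*(τ^5/30)*q^2 := by
      have e : (τ*W - C₀*(s2*q))^2
          = τ^2*W^2 - 2*τ*C₀*(s2*(q*W)) + C₀^2*(s2^2)*q^2 := by ring
      rw [hs2sq] at e
      linarith [sq_nonneg (τ*W - C₀*(s2*q)), e]
    have m3 : τ^2 * W^2 ≤ τ^2 * (C₀ * a w w) :=
      mul_le_mul_of_nonneg_left hpo (by positivity)
    have m0 : 4*τ*C₀*(‖η n‖^2 - ‖η (n-1)‖^2 + (τ/2) * (a w w))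
        ≤ 4*τ*C₀*(s1 * (p * W) + (1/2) * (s2 * (q * W))) :=
      mul_le_mul_of_nonneg_left hmain2 (by positivity)
    have hc4 : (0:ℝ) < 4*τ*C₀ := by positivity
    have hA1 : 4*τ*C₀*(‖η n‖^2 - ‖η (n-1)‖^2)
        ≤ 4*τ*C₀*(C₀*p^2 + (C₀*τ^4/120)*q^2) := by linarith [m0, m1, m2, m3]
    have hfin : ‖η n‖^2 ≤ ‖η (n-1)‖^2 + C₀ * p^2 + (C₀ * τ^4/120) * q^2 := by
      have := le_of_mul_le_mul_left hA1 hc4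
      linarith [this]
    rw [hpsq, hqsq] at hfin
    exact hfin
  -- induction and telescoping
  have key : ∀ n : ℕ, n ≤ N →
      ‖η n‖^2 ≤ ‖η 0‖^2 + C₀ * (∫ s in (0:ℝ)..((n:ℝ)*τ), ‖ρ' s‖^2)
        + (C₀ * τ^4/120) * ∫ s in (0:ℝ)..((n:ℝ)*τ), ‖u''' s‖^2 := by
    intro n
    induction n with
    | zero => intro _; simp
    | succ m ih =>
      intro hm
      have hm' : m ≤ N := Nat.le_of_succ_le hm
      have ihm := ih hm'
      have hst := step (m+1) (Nat.succ_le_succ (Nat.zero_le m)) hm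
      have hmτ : (0:ℝ) ≤ (m:ℝ)*τ := by positivity
      have hmN : ((m:ℝ)+1) ≤ (N:ℝ) := by exact_mod_cast hm
      have hm1T : ((m:ℝ)+1)*τ ≤ T := by
        rw [hT]; exact mul_le_mul_of_nonneg_right hmN hτ.le
      have hmm1 : (m:ℝ)*τ ≤ ((m:ℝ)+1)*τ := by nlinarith
      have hcast : ((m+1 : ℕ) : ℝ) = (m:ℝ) + 1 := by push_cast; ring
      rw [hcast] at hst
      have hcast2 : ((m:ℝ) + 1 - 1) = (m:ℝ) := by ring
      rw [hcast2] at hst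
      simp only [Nat.add_sub_cancel] at hst
      have hsub1 : Icc (0:ℝ) ((m:ℝ)*τ) ⊆ Icc (0:ℝ) T :=
        Icc_subset_Icc le_rfl (by linarith)
      have hsub2 : Icc ((m:ℝ)*τ) (((m:ℝ)+1)*τ) ⊆ Icc (0:ℝ) T :=
        Icc_subset_Icc hmτ hm1T
      have i1ρ : IntervalIntegrable (fun s => ‖ρ' s‖^2) MeasureTheory.volume 0 ((m:ℝ)*τ) :=
        ContinuousOn.intervalIntegrable (by rw [uIcc_of_le hmτ]; exact hρ'n.mono hsub1)
      have i2ρ : IntervalIntegrable (fun s => ‖ρ' s‖^2) MeasureTheory.volume ((m:ℝ)*τ) (((m:ℝ)+1)*τ) :=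
        ContinuousOn.intervalIntegrable (by rw [uIcc_of_le hmm1]; exact hρ'n.mono hsub2)
      have i1u : IntervalIntegrable (fun s => ‖u''' s‖^2) MeasureTheory.volume 0 ((m:ℝ)*τ) :=
        ContinuousOn.intervalIntegrable (by rw [uIcc_of_le hmτ]; exact hu'''n.mono hsub1)
      have i2u : IntervalIntegrable (fun s => ‖u''' s‖^2) MeasureTheory.volume ((m:ℝ)*τ) (((m:ℝ)+1)*τ) :=
        ContinuousOn.intervalIntegrable (by rw [uIcc_of_le hmm1]; exact hu'''n.mono hsub2)
      have adjρ := intervalIntegral.integral_add_adjacent_intervals i1ρ i2ρ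
      have adju := intervalIntegral.integral_add_adjacent_intervals i1u i2u
      rw [hcast]
      have adjρ' := congrArg (fun z => C₀ * z) adjρ
      have adju' := congrArg (fun z => (C₀ * τ^4/120) * z) adju
      linarith [hst, ihm, adjρ', adju']
  rw [hT]
  exact key N le_rfl
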